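/- Let k > 1 real, m, i positive integers with i ≤ km − m and km an integer. The probability that a uniformly random m-element subset S' of a km-element set S intersects a fixed i-element subset T ⊆ S is 1 − binom(km−i, m)/binom(km, m), and this quantity satisfies 1 − (1−1/k)^i ≤ 1 − binom(km−i,m)/binom(km,m) ≤ 1 − (1−1/k)^i + i(i−1)/(2(k−1)(km−i)). -/
import Mathlib


open Finset
open scoped Classical

-- (n - m) * C(n, m) = n * C(n-1, m)
lemma lemL (n m : ℕ) (h : m ≤ n) : (n - m) * n.choose m = n * (n-1).choose m := by
  rcases Nat.eq_or_lt_of_le h with rfl | h'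
  · rcases Nat.eq_zero_or_pos m with rfl | hm
    · simp
    · have h0 : (m - 1).choose m = 0 := Nat.choose_eq_zero_of_lt (by omega)
      simp [h0]
  · have hm1 : m ≤ n - 1 := by omega
    apply Nat.eq_of_mul_eq_mul_right (Nat.mul_pos (Nat.factorial_pos m) (Nat.factorial_pos (n-1-m)))
    have h1 : (n-1).choose m * m.factorial * ((n-1)-m).factorial = (n-1).factorial :=
      Nat.choose_mul_factorial_mul_factorial hm1
    have h2 : n.choose m * m.factorial * (n-m).factorial = n.factorial :=
      Nat.choose_mul_factorial_mul_factorial h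
    have h3 : (n - m).factorial = (n - m) * (n-1-m).factorial := by
      have : n - m = (n - 1 - m) + 1 := by omega
      rw [this, Nat.factorial_succ]
    have h4 : n.factorial = n * (n-1).factorial := by
      have : n = (n-1)+1 := by omega
      calc n.factorial = ((n-1)+1).factorial := by rw [← this]
        _ = n * (n-1).factorial := by rw [Nat.factorial_succ, ← this]
    calc (n - m) * n.choose m * (m.factorial * (n-1-m).factorial)
        = n.choose m * (m.factorial * ((n-m) * (n-1-m).factorial)) := by ring
      _ = n.factorial := by rw [h3] at h2; linarith [h2]
      _ = n * ((n-1).choose m * m.factorial * ((n-1)-m).factorial) := by rw [h1, h4]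
      _ = n * (n-1).choose m * (m.factorial * (n-1-m).factorial) := by ring

lemma prodL (n m : ℕ) : ∀ i, m + i ≤ n →
    (((n - i).choose m : ℝ)) * ∏ j ∈ Finset.range i, ((n:ℝ) - j)
      = (n.choose m : ℝ) * ∏ j ∈ Finset.range i, ((n:ℝ) - m - j)
  | 0, _ => by simp
  | (i+1), h => by
    have ih := prodL n m i (by omega)
    rw [Finset.prod_range_succ, Finset.prod_range_succ]
    have keyR := congrArg (Nat.cast : ℕ → ℝ) (lemL (n - i) m (by omega))
    push_cast [Nat.cast_sub (show m ≤ n - i by omega), Nat.cast_sub (show i ≤ n by omega)] at keyR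
    rw [Nat.sub_sub] at keyR
    linear_combination (-(∏ j ∈ Finset.range i, ((n:ℝ) - j))) * keyR + ((n:ℝ) - ↑i - ↑m) * ih

lemma prod_sub_le (s : Finset ℕ) (a b : ℕ → ℝ) (h0 : ∀ j ∈ s, 0 ≤ a j)
    (hab : ∀ j ∈ s, a j ≤ b j) (hb1 : ∀ j ∈ s, b j ≤ 1) :
    ∏ j ∈ s, b j - ∏ j ∈ s, a j ≤ ∑ j ∈ s, (b j - a j) := by
  induction s using Finset.cons_induction with
  | empty => simp
  | cons x s hx ih =>
    rw [prod_cons, prod_cons, sum_cons]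
    have hPa : 0 ≤ ∏ j ∈ s, a j :=
      Finset.prod_nonneg (fun j hj => h0 j (mem_cons.2 (Or.inr hj)))
    have hPab : ∏ j ∈ s, a j ≤ ∏ j ∈ s, b j :=
      Finset.prod_le_prod (fun j hj => h0 j (mem_cons.2 (Or.inr hj)))
        (fun j hj => hab j (mem_cons.2 (Or.inr hj)))
    have hPb1 : ∏ j ∈ s, b j ≤ 1 :=
      Finset.prod_le_one (fun j hj => le_trans (h0 j (mem_cons.2 (Or.inr hj))) (hab j (mem_cons.2 (Or.inr hj)))) (fun j hj => hb1 j (mem_cons.2 (Or.inr hj)))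
    have ih' := ih (fun j hj => h0 j (mem_cons.2 (Or.inr hj)))
      (fun j hj => hab j (mem_cons.2 (Or.inr hj)))
      (fun j hj => hb1 j (mem_cons.2 (Or.inr hj)))
    have h0x := h0 x (mem_cons_self x s)
    have habx := hab x (mem_cons_self x s)
    have hb1x := hb1 x (mem_cons_self x s)
    nlinarith [mul_nonneg h0x hPa]

/-- For real `k > 1` and positive integers `m, i` with `i ≤ km − m`
and `K = km` an integer: the probability that a uniformly random `m`-subset `S'` of a
`K`-element set `S` intersects a fixed `i`-element subset `T ⊆ S` equals
`1 − binom(K−i, m)/binom(K, m)`, and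
`1 − (1−1/k)^i ≤ 1 − binom(K−i,m)/binom(K,m) ≤ 1 − (1−1/k)^i + i(i−1)/(2(k−1)(km−i))`. -/
theorem stmt19 (k : ℝ) (m i K : ℕ) (hk : 1 < k) (hm : 0 < m) (hi : 0 < i)
    (hK : (K : ℝ) = k * m) (hile : (i : ℝ) ≤ k * m - m)
    {γ : Type*} [DecidableEq γ] (S T : Finset γ)
    (hTS : T ⊆ S) (hS : S.card = K) (hT : T.card = i) :
    (((S.powersetCard m).filter (fun A => (A ∩ T).Nonempty)).card : ℝ) /
        ((S.powersetCard m).card : ℝ) =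
      1 - ((K - i).choose m : ℝ) / (K.choose m : ℝ) ∧
    1 - (1 - 1 / k) ^ i ≤ 1 - ((K - i).choose m : ℝ) / (K.choose m : ℝ) ∧
    1 - ((K - i).choose m : ℝ) / (K.choose m : ℝ) ≤
      1 - (1 - 1 / k) ^ i + (i : ℝ) * (i - 1) / (2 * (k - 1) * (k * m - i)) := by
  have hk0 : (0:ℝ) < k := by linarith
  have hmi : m + i ≤ K := by
    have : ((m + i : ℕ) : ℝ) ≤ (K : ℝ) := by push_cast; linarith
    exact_mod_cast this
  have hiK : i ≤ K := by omega
  have hmK : m ≤ K := by omega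
  -- Part 1: counting
  have hpc : (S.powersetCard m).card = K.choose m := by rw [card_powersetCard, hS]
  have hdisj : (S.powersetCard m).filter (fun A => A ∩ T = ∅) = (S \ T).powersetCard m := by
    ext A
    simp only [mem_filter, mem_powersetCard, subset_sdiff, ← disjoint_iff_inter_eq_empty]
    constructor
    · rintro ⟨⟨h1, h2⟩, h3⟩; exact ⟨⟨h1, h3⟩, h2⟩
    · rintro ⟨⟨h1, h3⟩, h2⟩; exact ⟨⟨h1, h2⟩, h3⟩
  have hdc : ((S.powersetCard m).filter (fun A => A ∩ T = ∅)).card = (K - i).choose m := by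
    rw [hdisj, card_powersetCard, card_sdiff_of_subset hTS, hS, hT]
  have hsplit := Finset.card_filter_add_card_filter_not
    (s := S.powersetCard m) (p := fun A => (A ∩ T).Nonempty)
  have hneg : (S.powersetCard m).filter (fun A => ¬ (A ∩ T).Nonempty)
      = (S.powersetCard m).filter (fun A => A ∩ T = ∅) := by
    apply filter_congr; intro A _; simp [not_nonempty_iff_eq_empty]
  rw [hneg, hdc, hpc] at hsplit
  have hble : (K - i).choose m ≤ K.choose m := Nat.choose_le_choose m (by omega)
  have hCpos : 0 < K.choose m := Nat.choose_pos hmK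
  have hcard : ((S.powersetCard m).filter (fun A => (A ∩ T).Nonempty)).card
      = K.choose m - (K - i).choose m := by omega
  have part1 : (((S.powersetCard m).filter (fun A => (A ∩ T).Nonempty)).card : ℝ) /
        ((S.powersetCard m).card : ℝ) =
      1 - ((K - i).choose m : ℝ) / (K.choose m : ℝ) := by
    rw [hcard, hpc]
    have hCpos' : (0:ℝ) < (K.choose m : ℝ) := by exact_mod_cast hCpos
    rw [Nat.cast_sub hble]
    field_simp
  -- setup for bounds
  have hm1 : (1:ℝ) ≤ m := by exact_mod_cast hm
  have hi1 : (1:ℝ) ≤ i := by exact_mod_cast hi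
  have hKi : (0:ℝ) < (K:ℝ) - i := by rw [hK]; linarith
  have hKmi : (0:ℝ) < (K:ℝ) - m - (i - 1) := by rw [hK]; linarith
  have hjlt : ∀ j ∈ Finset.range i, (j:ℝ) ≤ (i:ℝ) - 1 := by
    intro j hj
    have : j + 1 ≤ i := Finset.mem_range.mp hj
    have : ((j:ℝ) + 1) ≤ i := by exact_mod_cast this
    linarith
  have hKj : ∀ j ∈ Finset.range i, (0:ℝ) < (K:ℝ) - j := by
    intro j hj; have := hjlt j hj; linarith
  have hnum : ∀ j ∈ Finset.range i, (0:ℝ) ≤ (K:ℝ) - m - j := by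
    intro j hj; have := hjlt j hj; linarith
  have h0 : ∀ j ∈ Finset.range i, (0:ℝ) ≤ ((K:ℝ) - m - j)/((K:ℝ) - j) := by
    intro j hj; exact div_nonneg (hnum j hj) (le_of_lt (hKj j hj))
  have hb0 : (0:ℝ) ≤ 1 - 1/k := by
    have : 1/k < 1 := by rw [div_lt_one hk0]; linarith
    linarith
  have hab : ∀ j ∈ Finset.range i, ((K:ℝ) - m - j)/((K:ℝ) - j) ≤ 1 - 1/k := by
    intro j hj
    have hKj' := hKj j hj
    have heq : (1:ℝ) - 1/k = (k-1)/k := by field_simp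
    rw [heq, div_le_div_iff₀ hKj' hk0]
    have hjn : (0:ℝ) ≤ j := Nat.cast_nonneg j
    rw [hK] at *
    nlinarith
  have hb1 : (1:ℝ) - 1/k ≤ 1 := by
    have : (0:ℝ) < 1/k := by positivity
    linarith
  -- ratio as a product
  have hCne : ((K.choose m : ℝ)) ≠ 0 := by positivity
  have hPne : ∏ j ∈ Finset.range i, ((K:ℝ) - j) ≠ 0 :=
    Finset.prod_ne_zero_iff.2 (fun j hj => ne_of_gt (hKj j hj))
  have hr : ((K - i).choose m : ℝ) / (K.choose m : ℝ)
      = ∏ j ∈ Finset.range i, (((K:ℝ) - m - j)/((K:ℝ) - j)) := by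
    rw [Finset.prod_div_distrib, div_eq_div_iff hCne hPne]
    linear_combination prodL K m i hmi
  have hprodle : ∏ j ∈ Finset.range i, (((K:ℝ) - m - j)/((K:ℝ) - j)) ≤ (1 - 1/k) ^ i := by
    calc ∏ j ∈ Finset.range i, (((K:ℝ) - m - j)/((K:ℝ) - j))
        ≤ ∏ _j ∈ Finset.range i, (1 - 1/k) := Finset.prod_le_prod h0 hab
      _ = (1 - 1/k) ^ i := by rw [Finset.prod_const, Finset.card_range]
  refine ⟨part1, ?_, ?_⟩
  · rw [hr]; linarith
  · -- upper bound
    have hk1 : (0:ℝ) < k - 1 := by linarith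
    have hD : (0:ℝ) < (k-1) * (k*m - i) := by
      apply mul_pos hk1; rw [← hK]; exact hKi
    have hterm : ∀ j ∈ Finset.range i,
        (1 - 1/k) - (((K:ℝ) - m - j)/((K:ℝ) - j)) ≤ (j:ℝ)/((k-1)*(k*m - i)) := by
      intro j hj
      have hKj' := hKj j hj
      have hjn : (0:ℝ) ≤ j := Nat.cast_nonneg j
      have hji := hjlt j hj
      rw [hK] at hKj' ⊢
      have key : (1 - 1/k) - ((k*(m:ℝ) - m - j)/(k*(m:ℝ) - j)) = (j:ℝ)/(k*(k*(m:ℝ) - j)) := by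
        field_simp
        ring
      rw [key, div_le_div_iff₀ (by positivity) hD]
      have hfac : (k-1)*(k*(m:ℝ) - i) ≤ k*(k*(m:ℝ) - j) :=
        mul_le_mul (by linarith) (by linarith) (by linarith [hD, hk1]) (le_of_lt hk0)
      exact mul_le_mul_of_nonneg_left hfac hjn
    have hsum1 : ∑ j ∈ Finset.range i, ((1 - 1/k) - (((K:ℝ) - m - j)/((K:ℝ) - j)))
        ≤ ∑ j ∈ Finset.range i, (j:ℝ)/((k-1)*(k*m - i)) := Finset.sum_le_sum hterm
    have hgauss : ∑ j ∈ Finset.range i, (j:ℝ) = (i:ℝ) * ((i:ℝ) - 1) / 2 := by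
      have h2 := Finset.sum_range_id_mul_two i
      have h2' : ((∑ j ∈ Finset.range i, j : ℕ) : ℝ) * 2 = ((i * (i-1) : ℕ) : ℝ) := by
        exact_mod_cast congrArg (Nat.cast : ℕ → ℝ) h2
      push_cast [Nat.cast_sub hi] at h2'
      push_cast
      linarith
    have hsum2 : ∑ j ∈ Finset.range i, (j:ℝ)/((k-1)*(k*m - i))
        = (i:ℝ) * ((i:ℝ) - 1) / (2 * (k-1) * (k*m - i)) := by
      rw [← Finset.sum_div, hgauss, div_div]
      ring_nf
    have hps := prod_sub_le (Finset.range i) (fun j => ((K:ℝ) - m - j)/((K:ℝ) - j))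
      (fun _ => 1 - 1/k) h0 hab (fun j _ => hb1)
    rw [Finset.prod_const, Finset.card_range] at hps
    rw [hr]
    rw [hsum2] at hsum1
    linarith
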